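/- For ε ∈ ℝ, define g_ε : ℝ² → ℝ² by g_ε(x,y) = (2x + y + ε·sin(2πx), x + y + ε·sin(2πx)). Suppose p : ℝ → ℝ² is differentiable at 0, p(0) = (1/5, 2/5), and there exists δ > 0 such that g_ε(g_ε(p(ε))) = p(ε) + (2, 1) for all ε ∈ (−δ, δ). Then the derivative of p at 0 equals (−(1/5)·sin(2π/5), −(2/5)·sin(2π/5)). -/

import Mathlib

/-- The base torus map `g_ε(x,y) = (2x + y + ε sin(2πx), x + y + ε sin(2πx))` lifted to ℝ². -/
noncomputable def gmap (ε : ℝ) (q : ℝ × ℝ) : ℝ × ℝ :=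
  (2 * q.1 + q.2 + ε * Real.sin (2 * Real.pi * q.1),
   q.1 + q.2 + ε * Real.sin (2 * Real.pi * q.1))

/-- the derivative at `ε = 0` of any differentiable family of 2-periodic
points of `g_ε` through `(1/5, 2/5)`. -/
theorem stmt_14 (p : ℝ → ℝ × ℝ) (hdiff : DifferentiableAt ℝ p 0)
    (hp0 : p 0 = (1 / 5, 2 / 5))
    (hper : ∃ δ > (0 : ℝ), ∀ ε ∈ Set.Ioo (-δ) δ, gmap ε (gmap ε (p ε)) = p ε + (2, 1)) :
    deriv p 0
      = (-(1 / 5) * Real.sin (2 * Real.pi / 5), -(2 / 5) * Real.sin (2 * Real.pi / 5)) := by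
  obtain ⟨δ, hδ, hper⟩ := hper
  have hd : HasDerivAt p (deriv p 0) 0 := hdiff.hasDerivAt
  set x' := (deriv p 0).1 with hx'def
  set y' := (deriv p 0).2 with hy'def
  have hx : HasDerivAt (fun ε => (p ε).1) x' 0 := hd.fst
  have hy : HasDerivAt (fun ε => (p ε).2) y' 0 := hd.snd
  set s := Real.sin (2 * Real.pi / 5) with hsdef
  -- inner sin derivative
  have hsx : HasDerivAt (fun ε => Real.sin (2 * Real.pi * (p ε).1))
      (Real.cos (2 * Real.pi * (p 0).1) * (2 * Real.pi * x')) 0 :=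
    (hx.const_mul (2 * Real.pi)).sin
  have hS : Real.sin (2 * Real.pi * (p 0).1) = s := by
    rw [hp0, hsdef]; norm_num; congr 1; ring
  have hes : HasDerivAt (fun ε => ε * Real.sin (2 * Real.pi * (p ε).1)) s 0 := by
    have := (hasDerivAt_id (0 : ℝ)).mul hsx
    simpa [hS, Pi.mul_def] using this
  -- inner components of gmap (p ε)
  have hu : HasDerivAt
      (fun ε => 2 * (p ε).1 + (p ε).2 + ε * Real.sin (2 * Real.pi * (p ε).1))
      (2 * x' + y' + s) 0 := ((hx.const_mul 2).add hy).add hes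
  have hv : HasDerivAt
      (fun ε => (p ε).1 + (p ε).2 + ε * Real.sin (2 * Real.pi * (p ε).1))
      (x' + y' + s) 0 := (hx.add hy).add hes
  -- outer sin derivative
  have hsu : HasDerivAt
      (fun ε => Real.sin (2 * Real.pi *
        (2 * (p ε).1 + (p ε).2 + ε * Real.sin (2 * Real.pi * (p ε).1))))
      (Real.cos (2 * Real.pi * (2 * (p 0).1 + (p 0).2 +
          (0:ℝ) * Real.sin (2 * Real.pi * (p 0).1))) * (2 * Real.pi * (2 * x' + y' + s))) 0 :=
    (hu.const_mul (2 * Real.pi)).sin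
  have hSV : Real.sin (2 * Real.pi * (2 * (p 0).1 + (p 0).2)) = -s := by
    rw [hp0]
    norm_num
    rw [show (2 * Real.pi * (4/5) : ℝ) = 2 * Real.pi - 2 * Real.pi / 5 by ring,
      Real.sin_sub, Real.sin_two_pi, Real.cos_two_pi, hsdef]
    ring
  have hesu : HasDerivAt
      (fun ε => ε * Real.sin (2 * Real.pi *
        (2 * (p ε).1 + (p ε).2 + ε * Real.sin (2 * Real.pi * (p ε).1)))) (-s) 0 := by
    have := (hasDerivAt_id (0 : ℝ)).mul hsu
    simpa [hSV, Pi.mul_def] using this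
  -- the two components of gmap ε (gmap ε (p ε))
  have hF1 : HasDerivAt
      (fun ε => 2 * (2 * (p ε).1 + (p ε).2 + ε * Real.sin (2 * Real.pi * (p ε).1)) +
        ((p ε).1 + (p ε).2 + ε * Real.sin (2 * Real.pi * (p ε).1)) +
        ε * Real.sin (2 * Real.pi *
          (2 * (p ε).1 + (p ε).2 + ε * Real.sin (2 * Real.pi * (p ε).1))))
      (2 * (2 * x' + y' + s) + (x' + y' + s) + -s) 0 :=
    ((hu.const_mul 2).add hv).add hesu
  have hF2 : HasDerivAt
      (fun ε => (2 * (p ε).1 + (p ε).2 + ε * Real.sin (2 * Real.pi * (p ε).1)) +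
        ((p ε).1 + (p ε).2 + ε * Real.sin (2 * Real.pi * (p ε).1)) +
        ε * Real.sin (2 * Real.pi *
          (2 * (p ε).1 + (p ε).2 + ε * Real.sin (2 * Real.pi * (p ε).1))))
      ((2 * x' + y' + s) + (x' + y' + s) + -s) 0 :=
    (hu.add hv).add hesu
  have hmem : Set.Ioo (-δ) δ ∈ nhds (0 : ℝ) := Ioo_mem_nhds (by linarith) hδ
  have hEq1 : (fun ε => 2 * (2 * (p ε).1 + (p ε).2 + ε * Real.sin (2 * Real.pi * (p ε).1)) +
        ((p ε).1 + (p ε).2 + ε * Real.sin (2 * Real.pi * (p ε).1)) +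
        ε * Real.sin (2 * Real.pi *
          (2 * (p ε).1 + (p ε).2 + ε * Real.sin (2 * Real.pi * (p ε).1))))
      =ᶠ[nhds 0] (fun ε => (p ε).1 + 2) := by
    filter_upwards [hmem] with ε hε
    have h := congrArg Prod.fst (hper ε hε)
    simpa [gmap] using h
  have hEq2 : (fun ε => (2 * (p ε).1 + (p ε).2 + ε * Real.sin (2 * Real.pi * (p ε).1)) +
        ((p ε).1 + (p ε).2 + ε * Real.sin (2 * Real.pi * (p ε).1)) +
        ε * Real.sin (2 * Real.pi *
          (2 * (p ε).1 + (p ε).2 + ε * Real.sin (2 * Real.pi * (p ε).1))))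
      =ᶠ[nhds 0] (fun ε => (p ε).2 + 1) := by
    filter_upwards [hmem] with ε hε
    have h := congrArg Prod.snd (hper ε hε)
    simpa [gmap] using h
  have hG1 : HasDerivAt (fun ε => (p ε).1 + 2) x' 0 := hx.add_const 2
  have hG2 : HasDerivAt (fun ε => (p ε).2 + 1) y' 0 := hy.add_const 1
  have eq1 : 2 * (2 * x' + y' + s) + (x' + y' + s) + -s = x' :=
    (hF1.congr_of_eventuallyEq hEq1.symm).unique hG1
  have eq2 : (2 * x' + y' + s) + (x' + y' + s) + -s = y' :=
    (hF2.congr_of_eventuallyEq hEq2.symm).unique hG2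
  have hx'val : x' = -(1/5) * s := by linarith
  have hy'val : y' = -(2/5) * s := by linarith
  have : deriv p 0 = (x', y') := by rw [hx'def, hy'def]
  rw [this, hx'val, hy'val]
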